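/- (Contraction of the strongly dissipative delayed subsystem, Remark 3.8, discrete case) Consider the discrete delayed z₂-subsystem with input and assume the strong dissipativity condition ℓ₂₂·‖w₂₂‖ < 1. Then for every continuous input v : [0,∞) → (Ω → ℝ^{n₂}) and every pair of solutions z₂ᵃ, z₂ᵇ of τ₂(r)·dz₂/dt(t,r) = −z₂(t,r) + Σ_{r'∈Ω} w₂₂(r,r')S₂₂(z₂(t−d₂₂(r,r'),r')) + v(t,r) (with arbitrary continuous initial histories on [−d̄,0]), the distance converges to zero: ‖z₂ᵃ(t) − z₂ᵇ(t)‖ → 0 as t → ∞. -/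

import Mathlib

open Set Filter Topology

/-- Action of a matrix on a Euclidean vector. -/
noncomputable def mApply {n m : ℕ} (M : Matrix (Fin n) (Fin m) ℝ)
    (v : EuclideanSpace ℝ (Fin m)) : EuclideanSpace ℝ (Fin n) :=
  WithLp.toLp 2 (fun i => ∑ j, M i j * v j)

/-- Operator norm of a matrix, induced by the Euclidean norms. -/
noncomputable def matOpNorm {n m : ℕ} (M : Matrix (Fin n) (Fin m) ℝ) : ℝ :=
  ‖LinearMap.toContinuousLinearMap (Matrix.toEuclideanLin M)‖

/-- Norm of a state `x : Ω → ℝⁿ`: `‖x‖² = ∑_r |x r|²`. -/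
noncomputable def vnorm {Ω : Type*} [Fintype Ω] {n : ℕ}
    (x : Ω → EuclideanSpace ℝ (Fin n)) : ℝ :=
  Real.sqrt (∑ r, ‖x r‖ ^ 2)

/-- Operator-norm based norm of a kernel: `‖k‖² = ∑_{r,r'} ‖k(r,r')‖²_op`. -/
noncomputable def knormOp {Ω : Type*} [Fintype Ω] {n m : ℕ}
    (k : Ω → Ω → Matrix (Fin n) (Fin m) ℝ) : ℝ :=
  Real.sqrt (∑ r, ∑ r', matOpNorm (k r r') ^ 2)

lemma mApply_eq {n m : ℕ} (M : Matrix (Fin n) (Fin m) ℝ) (v : EuclideanSpace ℝ (Fin m)) :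
    mApply M v = (LinearMap.toContinuousLinearMap (Matrix.toEuclideanLin M)) v := by
  ext i
  simp [mApply, Matrix.toEuclideanLin_apply, Matrix.mulVec, dotProduct]

lemma mApply_norm_le {n m : ℕ} (M : Matrix (Fin n) (Fin m) ℝ) (v : EuclideanSpace ℝ (Fin m)) :
    ‖mApply M v‖ ≤ matOpNorm M * ‖v‖ := by
  rw [mApply_eq]; exact ContinuousLinearMap.le_opNorm _ v

lemma mApply_sub {n m : ℕ} (M : Matrix (Fin n) (Fin m) ℝ) (u v : EuclideanSpace ℝ (Fin m)) :
    mApply M u - mApply M v = mApply M (u - v) := by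
  simp only [mApply_eq, ← map_sub]

lemma matOpNorm_nonneg {n m : ℕ} (M : Matrix (Fin n) (Fin m) ℝ) : 0 ≤ matOpNorm M :=
  norm_nonneg _

lemma decay_est {E : Type*} [NormedAddCommGroup E] [NormedSpace ℝ E]
    {τ c a b : ℝ} (hτ : 0 < τ) (hab : a ≤ b)
    {f g : ℝ → E} (hf : ContinuousOn f (Icc a b))
    (hd : ∀ t ∈ Ico a b, HasDerivWithinAt f (τ⁻¹ • (-(f t) + g t)) (Ici t) t)
    (hg : ∀ t ∈ Ico a b, ‖g t‖ ≤ c) :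
    ‖f b‖ ≤ Real.exp (-(b - a) / τ) * ‖f a‖ + (1 - Real.exp (-(b - a) / τ)) * c := by
  set y : ℝ → E := fun t => Real.exp (t / τ) • f t with hy
  have hexp : ∀ t : ℝ, HasDerivAt (fun s : ℝ => Real.exp (s / τ)) (Real.exp (t / τ) * τ⁻¹) t := by
    intro t
    simpa [div_eq_mul_inv] using
      ((hasDerivAt_id t).mul_const τ⁻¹).exp
  have hyd : ∀ t ∈ Ico a b,
      HasDerivWithinAt y ((Real.exp (t / τ) * τ⁻¹) • g t) (Ici t) t := by
    intro t ht
    have h1 : HasDerivWithinAt y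
        (Real.exp (t / τ) • (τ⁻¹ • (-(f t) + g t)) + (Real.exp (t / τ) * τ⁻¹) • f t)
        (Ici t) t :=
      ((hexp t).hasDerivWithinAt).smul (hd t ht)
    convert h1 using 1
    simp only [smul_add, smul_neg, smul_smul]
    abel_nf
  set B : ℝ → ℝ := fun t => Real.exp (a / τ) * ‖f a‖ + (Real.exp (t / τ) - Real.exp (a / τ)) * c
    with hB
  have hBd : ∀ t : ℝ, HasDerivAt B (Real.exp (t / τ) * τ⁻¹ * c) t := by
    intro t
    have := (((hexp t).sub_const (Real.exp (a / τ))).mul_const c).const_add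
      (Real.exp (a / τ) * ‖f a‖)
    simpa [hB] using this
  have key : ∀ x ∈ Icc a b, ‖y x‖ ≤ B x := by
    refine image_norm_le_of_norm_deriv_right_le_deriv_boundary ?_ hyd ?_ hBd ?_
    · exact (Real.continuous_exp.comp (continuous_id.div_const τ)).continuousOn.smul hf
    · simp [hy, hB, norm_smul, abs_of_pos (Real.exp_pos _)]
    · intro x hx
      rw [norm_smul]
      have h1 : ‖g x‖ ≤ c := hg x hx
      have h2 : (0:ℝ) < Real.exp (x / τ) * τ⁻¹ :=
        mul_pos (Real.exp_pos _) (inv_pos.2 hτ)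
      rw [Real.norm_eq_abs, abs_of_pos h2]
      exact mul_le_mul_of_nonneg_left h1 h2.le
  have hb := key b ⟨hab, le_rfl⟩
  have hyb : ‖y b‖ = Real.exp (b / τ) * ‖f b‖ := by
    simp [hy, norm_smul, abs_of_pos (Real.exp_pos _)]
  rw [hyb, hB] at hb
  have hpos := Real.exp_pos (b / τ)
  rw [← mul_le_mul_iff_right₀ hpos]
  have e1 : Real.exp (b / τ) * Real.exp (-(b - a) / τ) = Real.exp (a / τ) := by
    rw [← Real.exp_add]; ring_nf
  calc Real.exp (b / τ) * ‖f b‖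
      ≤ Real.exp (a / τ) * ‖f a‖ + (Real.exp (b / τ) - Real.exp (a / τ)) * c := hb
    _ = Real.exp (b / τ) * (Real.exp (-(b - a) / τ) * ‖f a‖
          + (1 - Real.exp (-(b - a) / τ)) * c) := by
        linear_combination (c - ‖f a‖) * e1


set_option maxHeartbeats 1000000 in
/-- **Contraction of the strongly dissipative delayed subsystem**
(Remark 3.8, discrete case). Under `ℓ₂₂·‖w₂₂‖ < 1`, any two solutions of the delayed
`z₂`-subsystem driven by the same continuous input `v` approach each other:
`‖z₂ᵃ(t) − z₂ᵇ(t)‖ → 0` as `t → ∞`. -/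
theorem contraction_of_dissipative_subsystem
    {Ω : Type*} [Fintype Ω] [Nonempty Ω]
    {n₂ : ℕ} (hn₂ : 0 < n₂)
    (dbar : ℝ) (hdbar : 0 < dbar)
    (τ₂ : Ω → ℝ) (hτ₂ : ∀ r, 0 < τ₂ r)
    (S₂₂ : EuclideanSpace ℝ (Fin n₂) → EuclideanSpace ℝ (Fin n₂))
    (Sb₂₂ : ℝ) (hSb₂₂ : ∀ x, ‖S₂₂ x‖ ≤ Sb₂₂)
    (l₂₂ : ℝ) (hl₂₂ : ∀ x y, ‖S₂₂ x - S₂₂ y‖ ≤ l₂₂ * ‖x - y‖)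
    (w₂₂ : Ω → Ω → Matrix (Fin n₂) (Fin n₂) ℝ)
    (d₂₂ : Ω → Ω → ℝ) (hd₂₂ : ∀ r r', d₂₂ r r' ∈ Icc 0 dbar)
    -- strong dissipativity
    (hdiss : l₂₂ * knormOp w₂₂ < 1)
    -- a continuous input
    (v : ℝ → Ω → EuclideanSpace ℝ (Fin n₂)) (hv : ContinuousOn v (Ici 0))
    -- two solutions driven by v
    (za zb : ℝ → Ω → EuclideanSpace ℝ (Fin n₂))
    (hzac : ContinuousOn za (Ici (-dbar))) (hzbc : ContinuousOn zb (Ici (-dbar)))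
    (hza : ∀ t ≥ (0:ℝ), ∀ r, HasDerivWithinAt (fun s => za s r)
      ((τ₂ r)⁻¹ • (-(za t r)
        + (∑ r', mApply (w₂₂ r r') (S₂₂ (za (t - d₂₂ r r') r')))
        + v t r)) (Ici 0) t)
    (hzb : ∀ t ≥ (0:ℝ), ∀ r, HasDerivWithinAt (fun s => zb s r)
      ((τ₂ r)⁻¹ • (-(zb t r)
        + (∑ r', mApply (w₂₂ r r') (S₂₂ (zb (t - d₂₂ r r') r')))
        + v t r)) (Ici 0) t) :
    Tendsto (fun t => vnorm (fun r => za t r - zb t r)) atTop (nhds 0) := by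
  classical
  set D : ℝ → Ω → EuclideanSpace ℝ (Fin n₂) := fun t r => za t r - zb t r with hD
  set G : ℝ → Ω → EuclideanSpace ℝ (Fin n₂) := fun t r =>
    ∑ r', mApply (w₂₂ r r') (S₂₂ (za (t - d₂₂ r r') r') - S₂₂ (zb (t - d₂₂ r r') r')) with hG
  set A : Ω → Ω → ℝ := fun r r' => matOpNorm (w₂₂ r r') with hA
  have hAnn : ∀ r r', 0 ≤ A r r' := fun r r' => matOpNorm_nonneg _
  have hSb0 : 0 ≤ Sb₂₂ := le_trans (norm_nonneg _) (hSb₂₂ 0)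
  have hl0 : 0 ≤ l₂₂ := by
    have h := hl₂₂ (EuclideanSpace.single (⟨0, hn₂⟩ : Fin n₂) (1:ℝ)) 0
    rw [sub_zero, EuclideanSpace.norm_single] at h
    have h2 := (norm_nonneg
      (S₂₂ (EuclideanSpace.single (⟨0, hn₂⟩ : Fin n₂) (1:ℝ)) - S₂₂ 0)).trans h
    simpa using h2
  -- derivative of the difference
  have hDd : ∀ t ≥ (0:ℝ), ∀ r,
      HasDerivWithinAt (fun s => D s r) ((τ₂ r)⁻¹ • (-(D t r) + G t r)) (Ici 0) t := by
    intro t ht r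
    have h := (hza t ht r).sub (hzb t ht r)
    have heq : (τ₂ r)⁻¹ • (-(D t r) + G t r) =
        (τ₂ r)⁻¹ • (-(za t r) + (∑ r', mApply (w₂₂ r r') (S₂₂ (za (t - d₂₂ r r') r'))) + v t r)
          - (τ₂ r)⁻¹ • (-(zb t r) + (∑ r', mApply (w₂₂ r r') (S₂₂ (zb (t - d₂₂ r r') r'))) + v t r) := by
      rw [← smul_sub]
      congr 1
      simp only [hD, hG, ← mApply_sub, Finset.sum_sub_distrib]
      abel
    rw [heq]
    exact h
  -- continuity of components
  have hDc : ∀ r, ContinuousOn (fun t => D t r) (Ici (-dbar)) := by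
    intro r
    exact (continuous_apply r).comp_continuousOn (hzac.sub hzbc)
  -- bound on G
  set Asum : ℝ := ∑ r, ∑ r', A r r' with hAsum
  have hAsum_nn : 0 ≤ Asum :=
    Finset.sum_nonneg fun r _ => Finset.sum_nonneg fun r' _ => hAnn r r'
  have hArow : ∀ r, (∑ r', A r r') ≤ Asum :=
    fun r => Finset.single_le_sum (f := fun r => ∑ r', A r r')
      (fun r _ => Finset.sum_nonneg fun r' _ => hAnn r r') (Finset.mem_univ r)
  set Cg : ℝ := Asum * (2 * Sb₂₂) with hCg
  have hCg0 : 0 ≤ Cg := mul_nonneg hAsum_nn (by linarith)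
  have hGb : ∀ t r, ‖G t r‖ ≤ Cg := by
    intro t r
    calc ‖G t r‖ ≤ ∑ r', A r r' * (2 * Sb₂₂) := by
          refine (norm_sum_le _ _).trans (Finset.sum_le_sum fun r' _ => ?_)
          refine (mApply_norm_le _ _).trans ?_
          refine mul_le_mul_of_nonneg_left ?_ (hAnn r r')
          refine (norm_sub_le _ _).trans ?_
          have h1 := hSb₂₂ (za (t - d₂₂ r r') r')
          have h2 := hSb₂₂ (zb (t - d₂₂ r r') r')
          linarith
      _ = (∑ r', A r r') * (2 * Sb₂₂) := by rw [Finset.sum_mul]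
      _ ≤ Cg := by rw [hCg]; exact mul_le_mul_of_nonneg_right (hArow r) (by linarith)
  -- bound on the initial segment
  obtain ⟨K₀, hK₀⟩ : ∃ K₀, ∀ t ∈ Icc (-dbar) (0:ℝ), ∀ r, ‖D t r‖ ≤ K₀ := by
    have hFc : ContinuousOn (fun t => ∑ r, ‖D t r‖) (Icc (-dbar) 0) :=
      continuousOn_finset_sum Finset.univ fun r _ => ((hDc r).mono Icc_subset_Ici_self).norm
    obtain ⟨K₀, hK₀⟩ := isCompact_Icc.exists_bound_of_continuousOn hFc
    refine ⟨K₀, fun t ht r => ?_⟩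
    have h1 : ‖D t r‖ ≤ ∑ r', ‖D t r'‖ :=
      Finset.single_le_sum (fun r' _ => norm_nonneg _) (Finset.mem_univ r)
    have h2 := hK₀ t ht
    rw [Real.norm_eq_abs] at h2
    exact h1.trans ((le_abs_self _).trans h2)
  set K : ℝ := max K₀ 0 + Cg with hK
  have hKnn : 0 ≤ K := by positivity
  -- a decay estimate on [a0, t]
  have hdecay : ∀ (a0 : ℝ), 0 ≤ a0 → ∀ (c : ℝ) (r : Ω),
      (∀ s, a0 ≤ s → ‖G s r‖ ≤ c) → ∀ t, a0 ≤ t →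
      ‖D t r‖ ≤ Real.exp (-(t - a0) / τ₂ r) * ‖D a0 r‖
        + (1 - Real.exp (-(t - a0) / τ₂ r)) * c := by
    intro a0 ha0 c r hc t ht
    refine decay_est (f := fun s => D s r) (g := fun s => G s r) (hτ₂ r) ht ?_ ?_ ?_
    · exact (hDc r).mono (fun s hs => le_trans (by linarith) hs.1)
    · intro s hs
      exact (hDd s (le_trans ha0 hs.1) r).mono (Ici_subset_Ici.2 (le_trans ha0 hs.1))
    · exact fun s hs => hc s hs.1
  -- global bound
  have hKb : ∀ t, -dbar ≤ t → ∀ r, ‖D t r‖ ≤ K := by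
    intro t ht r
    rcases le_or_gt t 0 with h0 | h0
    · refine (hK₀ t ⟨ht, h0⟩ r).trans ?_
      rw [hK]
      have h1 := le_max_left K₀ 0
      linarith
    · have h := hdecay 0 le_rfl Cg r (fun s _ => hGb s r) t h0.le
      have he1 : Real.exp (-(t - 0) / τ₂ r) ≤ 1 := by
        rw [Real.exp_le_one_iff, neg_div]
        have h2 : 0 ≤ (t - 0) / τ₂ r := div_nonneg (by linarith) (hτ₂ r).le
        linarith
      have he0 : 0 < Real.exp (-(t - 0) / τ₂ r) := Real.exp_pos _
      have hD0 : ‖D 0 r‖ ≤ max K₀ 0 :=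
        le_trans (hK₀ 0 ⟨by linarith, le_rfl⟩ r) (le_max_left _ _)
      have hmax0 : (0:ℝ) ≤ max K₀ 0 := le_max_right _ _
      rw [hK]
      nlinarith [norm_nonneg (D 0 r)]
  -- limsups
  set u : Ω → ℝ → ℝ := fun r t => ‖D t r‖ with hu
  have hbdd : ∀ r, IsBoundedUnder (· ≤ ·) atTop (u r) := fun r =>
    ⟨K, eventually_map.2 (((eventually_ge_atTop (-dbar)).mono fun t ht => hKb t ht r))⟩
  set L : Ω → ℝ := fun r => limsup (u r) atTop with hL
  have hL0 : ∀ r, 0 ≤ L r := fun r =>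
    le_limsup_of_frequently_le (Frequently.of_forall fun t => norm_nonneg _) (hbdd r)
  -- recursive inequality
  have hrec : ∀ r, L r ≤ l₂₂ * ∑ r', A r r' * L r' := by
    intro r
    by_contra hlt
    push_neg at hlt
    set X := l₂₂ * ∑ r', A r r' * L r' with hX
    set ε := (L r - X) / 4 with hε
    have hε0 : 0 < ε := by rw [hε]; linarith
    set δ := ε / (l₂₂ * Asum + 1) with hδ
    have hden : 0 < l₂₂ * Asum + 1 := by positivity
    have hδ0 : 0 < δ := div_pos hε0 hden
    have hev : ∀ᶠ t in atTop, ∀ r', u r' t ≤ L r' + δ := by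
      rw [eventually_all]
      intro r'
      have h1 := eventually_lt_of_limsup_lt (show L r' < L r' + δ by linarith) (hbdd r')
      exact h1.mono fun t ht => ht.le
    obtain ⟨T₁, hT₁⟩ := eventually_atTop.1 hev
    set a0 := max T₁ 0 + dbar with ha0
    have ha0nn : 0 ≤ a0 := by positivity
    set c := l₂₂ * ∑ r', A r r' * (L r' + δ) with hc
    have hgc : ∀ s, a0 ≤ s → ‖G s r‖ ≤ c := by
      intro s hs
      calc ‖G s r‖ ≤ ∑ r', A r r' * (l₂₂ * (L r' + δ)) := by
            refine (norm_sum_le _ _).trans (Finset.sum_le_sum fun r' _ => ?_)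
            refine (mApply_norm_le _ _).trans (mul_le_mul_of_nonneg_left ?_ (hAnn r r'))
            refine (hl₂₂ _ _).trans (mul_le_mul_of_nonneg_left ?_ hl0)
            have hds : T₁ ≤ s - d₂₂ r r' := by
              have h1 := (hd₂₂ r r').2
              have h2 : T₁ ≤ max T₁ 0 := le_max_left _ _
              rw [ha0] at hs
              linarith
            exact hT₁ (s - d₂₂ r r') hds r'
        _ = c := by
            rw [hc, Finset.mul_sum]
            exact Finset.sum_congr rfl fun r' _ => by ring
    have hcnn : 0 ≤ c := by
      refine mul_nonneg hl0 (Finset.sum_nonneg fun r' _ => mul_nonneg (hAnn r r') ?_)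
      linarith [hL0 r']
    have hexp_tendsto :
        Tendsto (fun t => Real.exp (-(t - a0) / τ₂ r) * ‖D a0 r‖) atTop (nhds 0) := by
      have h1 : Tendsto (fun t : ℝ => -(t - a0) / τ₂ r) atTop atBot := by
        apply Tendsto.atBot_div_const (hτ₂ r)
        apply tendsto_neg_atBot_iff.2
        exact tendsto_atTop_add_const_right _ _ tendsto_id
      simpa using (Real.tendsto_exp_atBot.comp h1).mul_const (‖D a0 r‖)
    have hevε : ∀ᶠ t in atTop, u r t ≤ c + ε := by
      have h2 : ∀ᶠ t in atTop, Real.exp (-(t - a0) / τ₂ r) * ‖D a0 r‖ < ε :=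
        hexp_tendsto.eventually_lt_const hε0
      filter_upwards [eventually_ge_atTop a0, h2] with t ht h2t
      have h := hdecay a0 ha0nn c r hgc t ht
      have he0 : 0 < Real.exp (-(t - a0) / τ₂ r) := Real.exp_pos _
      have h3 : 0 ≤ Real.exp (-(t - a0) / τ₂ r) * c := mul_nonneg he0.le hcnn
      have : u r t = ‖D t r‖ := rfl
      rw [this]
      nlinarith
    have hLle : L r ≤ c + ε :=
      limsup_le_of_le (isCoboundedUnder_le_of_le atTop fun t => norm_nonneg _) hevε
    have hcX : c ≤ X + ε := by
      have expand : c = X + l₂₂ * δ * (∑ r', A r r') := by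
        rw [hc, hX]
        have hsplit : ∑ r', A r r' * (L r' + δ)
            = ∑ r', (A r r' * L r' + δ * A r r') :=
          Finset.sum_congr rfl fun r' _ => by ring
        rw [hsplit, Finset.sum_add_distrib, ← Finset.mul_sum]
        ring
      have h4 : l₂₂ * (∑ r', A r r') ≤ l₂₂ * Asum + 1 := by
        have h5 := mul_le_mul_of_nonneg_left (hArow r) hl0
        linarith
      have h3 : l₂₂ * δ * (∑ r', A r r') ≤ δ * (l₂₂ * Asum + 1) := by
        calc l₂₂ * δ * (∑ r', A r r') = δ * (l₂₂ * (∑ r', A r r')) := by ring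
          _ ≤ δ * (l₂₂ * Asum + 1) := mul_le_mul_of_nonneg_left h4 hδ0.le
      have h5 : δ * (l₂₂ * Asum + 1) = ε := by
        rw [hδ]; field_simp
      linarith [expand]
    rw [hε] at hLle hcX
    linarith
  -- linear algebra: the limsup vector vanishes
  have hknorm_sq : knormOp w₂₂ ^ 2 = ∑ r, ∑ r', A r r' ^ 2 := by
    rw [knormOp, Real.sq_sqrt]
    exact Finset.sum_nonneg fun r _ => Finset.sum_nonneg fun r' _ => sq_nonneg _
  set SL : ℝ := ∑ r, L r ^ 2 with hSL
  have hSL0 : 0 ≤ SL := Finset.sum_nonneg fun r _ => sq_nonneg _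
  have hSLle : SL ≤ (l₂₂ * knormOp w₂₂) ^ 2 * SL := by
    have step1 : SL ≤ ∑ r, (l₂₂ * ∑ r', A r r' * L r') ^ 2 := by
      refine Finset.sum_le_sum fun r _ => ?_
      exact pow_le_pow_left₀ (hL0 r) (hrec r) 2
    have step2 : ∀ r : Ω, (∑ r', A r r' * L r') ^ 2 ≤ (∑ r', A r r' ^ 2) * SL := by
      intro r
      rw [hSL]
      exact Finset.sum_mul_sq_le_sq_mul_sq Finset.univ (A r) L
    calc SL ≤ ∑ r, (l₂₂ * ∑ r', A r r' * L r') ^ 2 := step1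
      _ = ∑ r, l₂₂ ^ 2 * (∑ r', A r r' * L r') ^ 2 := by
          exact Finset.sum_congr rfl fun r _ => by ring
      _ ≤ ∑ r, l₂₂ ^ 2 * ((∑ r', A r r' ^ 2) * SL) := by
          refine Finset.sum_le_sum fun r _ => ?_
          exact mul_le_mul_of_nonneg_left (step2 r) (sq_nonneg _)
      _ = (l₂₂ * knormOp w₂₂) ^ 2 * SL := by
          rw [show (∑ r, l₂₂ ^ 2 * ((∑ r', A r r' ^ 2) * SL))
              = (∑ r, ∑ r', A r r' ^ 2) * (l₂₂ ^ 2 * SL) by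
            rw [Finset.sum_mul]
            exact Finset.sum_congr rfl fun r _ => by ring]
          rw [mul_pow, hknorm_sq]
          ring
  have hq0 : 0 ≤ l₂₂ * knormOp w₂₂ := mul_nonneg hl0 (Real.sqrt_nonneg _)
  have hq1 : (l₂₂ * knormOp w₂₂) ^ 2 < 1 := by nlinarith
  have hSLz : SL = 0 := by nlinarith
  have hLz : ∀ r, L r = 0 := by
    intro r
    have h1 := (Finset.sum_eq_zero_iff_of_nonneg
      (fun i _ => sq_nonneg (L i))).1 hSLz r (Finset.mem_univ r)
    exact pow_eq_zero_iff two_ne_zero |>.1 h1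
  -- each component tends to 0
  have htend : ∀ r, Tendsto (u r) atTop (nhds 0) := by
    intro r
    refine tendsto_order.2 ⟨fun a' ha' => Eventually.of_forall
      fun t => lt_of_lt_of_le ha' (norm_nonneg _), fun b' hb' => ?_⟩
    refine eventually_lt_of_limsup_lt ?_ (hbdd r)
    have : limsup (u r) atTop = L r := rfl
    rw [this, hLz r]
    exact hb'
  -- conclude
  have hsum : Tendsto (fun t => ∑ r, ‖D t r‖ ^ 2) atTop (nhds 0) := by
    have h1 := tendsto_finset_sum (Finset.univ : Finset Ω)
      (fun r _ => ((htend r).pow 2))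
    simpa using h1
  have h2 := (Real.continuous_sqrt.tendsto 0).comp hsum
  rw [Real.sqrt_zero] at h2
  exact h2
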